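/- Let F = {f₁,…,f_t} be functions on ℂˢ with relevant partial derivatives at a zero x̂. A differential functional c (a finite linear combination of the functionals ∂_j[x̂] with multi-indices j) satisfies the closedness condition φ_i(c) ∈ D_{x̂}(F) for all i together with c(F) = {0} if and only if c((x − x̂)^j · f_i(x)) = 0 for every multi-index j ≥ 0 and every i ∈ {1,…,t}. -/

import Mathlib

variable {s : ℕ}

/-- One partial derivative in direction `i`. -/
noncomputable def pderivI (i : Fin s) (f : (Fin s → ℂ) → ℂ) : (Fin s → ℂ) → ℂ :=
  fun x => deriv (fun t => f (Function.update x i t)) (x i)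

/-- Iterated partial derivative with multi-index `j : Fin s → ℕ`
(applied in the fixed coordinate order). -/
noncomputable def pdMulti (j : Fin s → ℕ) (f : (Fin s → ℂ) → ℂ) : (Fin s → ℂ) → ℂ :=
  ((List.ofFn fun i : Fin s => (pderivI i)^[j i]).foldr (· ∘ ·) id) f

/-- The scaled partial-derivative functional `∂_j[xh]`. -/
noncomputable def scaledPD (j : Fin s → ℕ) (f : (Fin s → ℂ) → ℂ) (xh : Fin s → ℂ) : ℂ :=
  pdMulti j f xh / (∏ i, ((j i).factorial : ℂ))

/-- Application of a differential functional, encoded by its finitely many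
coefficients `c : (Fin s → ℕ) →₀ ℂ`, to a function `f` at the point `xh`. -/
noncomputable def applyF (xh : Fin s → ℂ) (c : (Fin s → ℕ) →₀ ℂ) (f : (Fin s → ℂ) → ℂ) : ℂ :=
  c.sum fun j cj => cj * scaledPD j f xh

/-- Raising a multi-index by one in coordinate `i`. -/
def raiseIdx (i : Fin s) (j : Fin s → ℕ) : Fin s → ℕ := Function.update j i (j i + 1)

theorem raiseIdx_injective (i : Fin s) : Function.Injective (raiseIdx i) := by
  intro a b h
  funext x
  by_cases hx : x = i
  · subst hx
    have := congrFun h x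
    simp [raiseIdx] at this
    exact this
  · have := congrFun h x
    simpa [raiseIdx, Function.update_of_ne hx] using this

/-- The anti-differentiation operator `φ_i` on functionals:
`(φ_i c)(j) = c(j + e_i)`. -/
noncomputable def phi (i : Fin s) (c : (Fin s → ℕ) →₀ ℂ) : (Fin s → ℕ) →₀ ℂ :=
  Finsupp.comapDomain (raiseIdx i) c ((raiseIdx_injective i).injOn)

/-- The dual subspaces `D^α_{xh}(F)` of Definition 1: `D⁰` is the span of
`∂_{0⋯0}`, and `D^{α+1}` consists of the functionals of differential order
`≤ α+1` vanishing on the system whose images under every `φ_i` lie in `D^α`. -/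
def DSub (t : ℕ) (F : Fin t → ((Fin s → ℂ) → ℂ)) (xh : Fin s → ℂ) :
    ℕ → Set ((Fin s → ℕ) →₀ ℂ)
  | 0 => {c | ∃ a : ℂ, c = Finsupp.single 0 a}
  | (α + 1) => {c | (∀ j ∈ c.support, (∑ i, j i) ≤ α + 1)
      ∧ (∀ i, applyF xh c (F i) = 0)
      ∧ ∀ i : Fin s, phi i c ∈ DSub t F xh α}

/-- The dual space `D_{xh}(F)`: the union of all the dual subspaces. -/
def DualSpace (t : ℕ) (F : Fin t → ((Fin s → ℂ) → ℂ)) (xh : Fin s → ℂ) :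
    Set ((Fin s → ℕ) →₀ ℂ) := ⋃ α : ℕ, DSub t F xh α

lemma hasDerivAt_comp_update {f : (Fin s → ℂ) → ℂ} {x : Fin s → ℂ}
    (hf : DifferentiableAt ℂ f x) (i : Fin s) :
    HasDerivAt (fun t => f (Function.update x i t)) (fderiv ℂ f x (Pi.single i 1)) (x i) := by
  have h1 := hasDerivAt_update x i (x i)
  have h2 : HasFDerivAt f (fderiv ℂ f x) (Function.update x i (x i)) := by
    rw [Function.update_eq_self]; exact hf.hasFDerivAt
  exact h2.comp_hasDerivAt (x i) h1

lemma pderivI_eq {f : (Fin s → ℂ) → ℂ} {x : Fin s → ℂ}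
    (hf : DifferentiableAt ℂ f x) (i : Fin s) :
    pderivI i f x = fderiv ℂ f x (Pi.single i 1) := (hasDerivAt_comp_update hf i).deriv

lemma contDiff_pderivI {f : (Fin s → ℂ) → ℂ} (hf : ContDiff ℂ ⊤ f) (i : Fin s) :
    ContDiff ℂ ⊤ (pderivI i f) := by
  have : pderivI i f = fun x => fderiv ℂ f x (Pi.single i 1) :=
    funext fun x => pderivI_eq (hf.differentiable (by simp)).differentiableAt i
  rw [this]
  exact (hf.fderiv_right le_top).clm_apply contDiff_const

/-- multiply by coordinate factor -/

def mulC (i : Fin s) (a : ℂ) (f : (Fin s → ℂ) → ℂ) : (Fin s → ℂ) → ℂ :=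
  fun x => (x i - a) * f x

lemma contDiff_coord (i : Fin s) : ContDiff ℂ ⊤ (fun x : Fin s → ℂ => x i) :=
  (ContinuousLinearMap.proj i : ((Fin s) → ℂ) →L[ℂ] ℂ).contDiff

lemma contDiff_mulC {f : (Fin s → ℂ) → ℂ} (hf : ContDiff ℂ ⊤ f) (i : Fin s) (a : ℂ) :
    ContDiff ℂ ⊤ (mulC i a f) :=
  ((contDiff_coord i).sub contDiff_const).mul hf

lemma pderivI_add {g h : (Fin s → ℂ) → ℂ} (hg : Differentiable ℂ g)
    (hh : Differentiable ℂ h) (i : Fin s) :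
    pderivI i (fun x => g x + h x) = fun x => pderivI i g x + pderivI i h x := by
  funext x
  have h1 := hasDerivAt_comp_update (hg x) i
  have h2 := hasDerivAt_comp_update (hh x) i
  have := (h1.add h2).deriv
  simp only [pderivI]
  rw [h1.deriv, h2.deriv]; exact this

lemma pderivI_const_mul {g : (Fin s → ℂ) → ℂ} (hg : Differentiable ℂ g) (a : ℂ) (i : Fin s) :
    pderivI i (fun x => a * g x) = fun x => a * pderivI i g x := by
  funext x
  have h1 := hasDerivAt_comp_update (hg x) i
  have := (h1.const_mul a).deriv
  simp only [pderivI]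
  rw [this, h1.deriv]

lemma pderivI_mulC_ne {f : (Fin s → ℂ) → ℂ} (hf : Differentiable ℂ f) {i k : Fin s}
    (hik : i ≠ k) (a : ℂ) :
    pderivI k (mulC i a f) = mulC i a (pderivI k f) := by
  funext x
  have h1 := hasDerivAt_comp_update (hf x) k
  have heq : (fun t => mulC i a f (Function.update x k t))
      = fun t => (x i - a) * f (Function.update x k t) := by
    funext t
    simp [mulC, Function.update_of_ne hik]
  simp only [pderivI]
  rw [show (fun t => mulC i a f (Function.update x k t) : ℂ → ℂ) = _ from heq]
  rw [(h1.const_mul (x i - a)).deriv]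
  simp only [mulC, pderivI]
  rw [h1.deriv]

lemma pderivI_mulC_eq {f : (Fin s → ℂ) → ℂ} (hf : Differentiable ℂ f) (i : Fin s) (a : ℂ) :
    pderivI i (mulC i a f) = fun x => f x + (x i - a) * pderivI i f x := by
  funext x
  have h2 := hasDerivAt_comp_update (hf x) i
  have h1 : HasDerivAt (fun t : ℂ => t - a) 1 (x i) := (hasDerivAt_id (x i)).sub_const a
  have hprod := h1.mul h2
  have heq : (fun t => mulC i a f (Function.update x i t))
      = fun t => (t - a) * f (Function.update x i t) := by
    funext t; simp [mulC]
  simp only [pderivI]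
  rw [show (fun t => mulC i a f (Function.update x i t) : ℂ → ℂ) = _ from heq]
  rw [show (fun t => (t - a) * f (Function.update x i t)) = ((fun t : ℂ => t - a) * fun t => f (Function.update x i t)) from rfl, hprod.deriv, h2.deriv]
  simp [Function.update_eq_self]

/-- Apply `pderivI` for each index in the list (head outermost). -/

noncomputable def Dl (l : List (Fin s)) (f : (Fin s → ℂ) → ℂ) : (Fin s → ℂ) → ℂ :=
  l.foldr (fun k g => pderivI k g) f

@[simp] lemma Dl_nil (f : (Fin s → ℂ) → ℂ) : Dl [] f = f := rfl

@[simp] lemma Dl_cons (k : Fin s) (l : List (Fin s)) (f : (Fin s → ℂ) → ℂ) :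
    Dl (k :: l) f = pderivI k (Dl l f) := rfl

lemma Dl_append (l₁ l₂ : List (Fin s)) (f : (Fin s → ℂ) → ℂ) :
    Dl (l₁ ++ l₂) f = Dl l₁ (Dl l₂ f) := by
  simp [Dl, List.foldr_append]

lemma contDiff_Dl {f : (Fin s → ℂ) → ℂ} (hf : ContDiff ℂ ⊤ f) (l : List (Fin s)) :
    ContDiff ℂ ⊤ (Dl l f) := by
  induction l with
  | nil => simpa
  | cons k l ih => exact contDiff_pderivI ih k

lemma iterate_eq_Dl (i : Fin s) (n : ℕ) (f : (Fin s → ℂ) → ℂ) :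
    (pderivI i)^[n] f = Dl (List.replicate n i) f := by
  induction n with
  | zero => simp
  | succ n ih => rw [Function.iterate_succ_apply', ih]; simp [List.replicate_succ]
    -- replicate (n+1) i = i :: replicate n i, Dl_cons

lemma Dl_mulC_notMem {f : (Fin s → ℂ) → ℂ} (hf : ContDiff ℂ ⊤ f) {i : Fin s} (a : ℂ)
    {l : List (Fin s)} (hl : i ∉ l) : Dl l (mulC i a f) = mulC i a (Dl l f) := by
  induction l with
  | nil => simp
  | cons k l ih =>
    have hik : i ≠ k := fun h => hl (h ▸ List.mem_cons_self (a := k) (l := l))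
    have hl' : i ∉ l := fun h => hl (List.mem_cons_of_mem k h)
    rw [Dl_cons, ih hl', pderivI_mulC_ne ((contDiff_Dl hf l).differentiable (by simp)) hik a,
      Dl_cons]

lemma Dl_add {g h : (Fin s → ℂ) → ℂ} (hg : ContDiff ℂ ⊤ g) (hh : ContDiff ℂ ⊤ h)
    (l : List (Fin s)) :
    Dl l (fun x => g x + h x) = fun x => Dl l g x + Dl l h x := by
  induction l with
  | nil => simp
  | cons k l ih =>
    rw [Dl_cons, ih, Dl_cons, Dl_cons]
    exact pderivI_add ((contDiff_Dl hg l).differentiable (by simp))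
      ((contDiff_Dl hh l).differentiable (by simp)) k

lemma Dl_const_mul {g : (Fin s → ℂ) → ℂ} (hg : ContDiff ℂ ⊤ g) (a : ℂ) (l : List (Fin s)) :
    Dl l (fun x => a * g x) = fun x => a * Dl l g x := by
  induction l with
  | nil => simp
  | cons k l ih =>
    rw [Dl_cons, ih, Dl_cons]
    exact pderivI_const_mul ((contDiff_Dl hg l).differentiable (by simp)) a k

lemma contDiff_iter {f : (Fin s → ℂ) → ℂ} (hf : ContDiff ℂ ⊤ f) (i : Fin s) (n : ℕ) :
    ContDiff ℂ ⊤ ((pderivI i)^[n] f) := by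
  rw [iterate_eq_Dl]; exact contDiff_Dl hf _

lemma iter_mulC {f : (Fin s → ℂ) → ℂ} (hf : ContDiff ℂ ⊤ f) (i : Fin s) (a : ℂ) (n : ℕ) :
    (pderivI i)^[n + 1] (mulC i a f)
      = fun x => ((n : ℂ) + 1) * (pderivI i)^[n] f x + mulC i a ((pderivI i)^[n + 1] f) x := by
  induction n with
  | zero =>
    funext x
    rw [Function.iterate_one, pderivI_mulC_eq (hf.differentiable (by simp)) i a]
    simp [mulC]
  | succ n ih =>
    rw [Function.iterate_succ_apply', ih]
    have hA : ContDiff ℂ ⊤ (fun x => ((n : ℂ) + 1) * (pderivI i)^[n] f x) :=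
      contDiff_const.mul (contDiff_iter hf i n)
    have hB : ContDiff ℂ ⊤ (mulC i a ((pderivI i)^[n + 1] f)) :=
      contDiff_mulC (contDiff_iter hf i (n + 1)) i a
    rw [pderivI_add (hA.differentiable (by simp)) (hB.differentiable (by simp)) i,
      pderivI_const_mul ((contDiff_iter hf i n).differentiable (by simp)) _ i,
      pderivI_mulC_eq ((contDiff_iter hf i (n + 1)).differentiable (by simp)) i a]
    funext x
    rw [← Function.iterate_succ_apply' (pderivI i) n f]
    rw [← Function.iterate_succ_apply' (pderivI i) (n + 1) f]
    simp only [mulC]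
    push_cast
    ring

lemma Dl_mulC_main {f : (Fin s → ℂ) → ℂ} (hf : ContDiff ℂ ⊤ f) {i : Fin s} (a : ℂ)
    {l₁ l₂ : List (Fin s)} (h1 : i ∉ l₁) (h2 : i ∉ l₂) (n : ℕ) :
    Dl (l₁ ++ (List.replicate (n + 1) i ++ l₂)) (mulC i a f)
      = fun x => ((n : ℂ) + 1) * Dl (l₁ ++ (List.replicate n i ++ l₂)) f x
          + mulC i a (Dl (l₁ ++ (List.replicate (n + 1) i ++ l₂)) f) x := by
  have hg : ContDiff ℂ ⊤ (Dl l₂ f) := contDiff_Dl hf l₂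
  have step : Dl (List.replicate (n + 1) i ++ l₂) (mulC i a f)
      = fun x => ((n : ℂ) + 1) * Dl (List.replicate n i ++ l₂) f x
          + mulC i a (Dl (List.replicate (n + 1) i ++ l₂) f) x := by
    rw [Dl_append, Dl_append, Dl_append, Dl_mulC_notMem hf a h2,
      ← iterate_eq_Dl, ← iterate_eq_Dl, ← iterate_eq_Dl]
    exact iter_mulC hg i a n
  rw [Dl_append, step]
  have hA : ContDiff ℂ ⊤ (fun x => ((n : ℂ) + 1) * Dl (List.replicate n i ++ l₂) f x) :=
    contDiff_const.mul (contDiff_Dl hf _)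
  have hB : ContDiff ℂ ⊤ (mulC i a (Dl (List.replicate (n + 1) i ++ l₂) f)) :=
    contDiff_mulC (contDiff_Dl hf _) i a
  rw [Dl_add hA hB l₁, Dl_const_mul (contDiff_Dl hf _) _ l₁,
    Dl_mulC_notMem (contDiff_Dl hf _) a h1]
  simp only [Dl_append]

def bigList (j : Fin s → ℕ) : List (Fin s) := (List.ofFn fun k => List.replicate (j k) k).flatten

lemma foldr_comp_apply {α : Type*} (L : List ((α → ℂ) → (α → ℂ))) (f : α → ℂ) :
    (L.foldr (· ∘ ·) id) f = L.foldr (fun g r => g r) f := by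
  induction L with
  | nil => rfl
  | cons g L ih => simp [List.foldr_cons, Function.comp, ih]

lemma foldr_Dl_join (Ls : List (List (Fin s))) (f : (Fin s → ℂ) → ℂ) :
    (Ls.map fun l => (Dl l : ((Fin s → ℂ) → ℂ) → ((Fin s → ℂ) → ℂ))).foldr
      (fun g r => g r) f = Dl Ls.flatten f := by
  induction Ls with
  | nil => rfl
  | cons l Ls ih =>
    simp only [List.map_cons, List.foldr_cons, ih]
    rw [show (l :: Ls).flatten = l ++ Ls.flatten from rfl, Dl_append]

lemma pdMulti_eq_Dl (j : Fin s → ℕ) (f : (Fin s → ℂ) → ℂ) :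
    pdMulti j f = Dl (bigList j) f := by
  rw [pdMulti, foldr_comp_apply, bigList, ← foldr_Dl_join, List.map_ofFn]
  congr 1
  rw [← Function.comp_def]
  congr 1
  funext k
  funext g
  exact iterate_eq_Dl k (j k) g

lemma bigList_decomp (j : Fin s → ℕ) (i : Fin s) :
    bigList j = ((List.ofFn fun k => List.replicate (j k) k).take i).flatten
      ++ (List.replicate (j i) i
        ++ ((List.ofFn fun k => List.replicate (j k) k).drop (i + 1)).flatten) := by
  set L := List.ofFn fun k => List.replicate (j k) k with hL
  have hlen : (i : ℕ) < L.length := by simp [hL, i.isLt]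
  conv_lhs => rw [bigList, ← hL, ← List.take_append_drop (i : ℕ) L,
    List.drop_eq_getElem_cons hlen]
  rw [List.flatten_append, List.flatten_cons]
  congr 1
  congr 1
  simp [hL]

lemma take_update_eq (j : Fin s → ℕ) (i : Fin s) (m : ℕ) :
    (List.ofFn fun k => List.replicate (Function.update j i m k) k).take i
      = (List.ofFn fun k => List.replicate (j k) k).take i := by
  apply List.ext_getElem
  · simp
  · intro n h1 h2
    have hn : n < (i : ℕ) := by simp at h1; omega
    have hns : n < s := by simp at h2; omega
    rw [List.getElem_take, List.getElem_take, List.getElem_ofFn, List.getElem_ofFn]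
    have hne : (⟨n, hns⟩ : Fin s) ≠ i := by
      intro h; rw [Fin.ext_iff] at h; simp at h; omega
    rw [Function.update_of_ne hne]

lemma drop_update_eq (j : Fin s → ℕ) (i : Fin s) (m : ℕ) :
    (List.ofFn fun k => List.replicate (Function.update j i m k) k).drop (i + 1)
      = (List.ofFn fun k => List.replicate (j k) k).drop (i + 1) := by
  apply List.ext_getElem
  · simp
  · intro n h1 h2
    have hns : (i : ℕ) + 1 + n < s := by simp at h2; omega
    rw [List.getElem_drop, List.getElem_drop, List.getElem_ofFn, List.getElem_ofFn]
    have hne : (⟨(i : ℕ) + 1 + n, hns⟩ : Fin s) ≠ i := by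
      intro h; rw [Fin.ext_iff] at h; simp at h; omega
    rw [Function.update_of_ne hne]

lemma notMem_take_flatten (j : Fin s → ℕ) (i : Fin s) :
    i ∉ ((List.ofFn fun k => List.replicate (j k) k).take i).flatten := by
  intro h
  obtain ⟨l, hl, hil⟩ := List.mem_flatten.mp h
  obtain ⟨n, hn, rfl⟩ := List.mem_iff_getElem.mp hl
  rw [List.getElem_take, List.getElem_ofFn] at hil
  have := List.eq_of_mem_replicate hil
  have hn' : n < (i : ℕ) := by simpa using hn
  rw [Fin.ext_iff] at this
  simp at this
  omega

lemma notMem_drop_flatten (j : Fin s → ℕ) (i : Fin s) :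
    i ∉ ((List.ofFn fun k => List.replicate (j k) k).drop (i + 1)).flatten := by
  intro h
  obtain ⟨l, hl, hil⟩ := List.mem_flatten.mp h
  obtain ⟨n, hn, rfl⟩ := List.mem_iff_getElem.mp hl
  rw [List.getElem_drop, List.getElem_ofFn] at hil
  have := List.eq_of_mem_replicate hil
  rw [Fin.ext_iff] at this
  simp at this
  omega

lemma pdMulti_mulC {f : (Fin s → ℂ) → ℂ} (hf : ContDiff ℂ ⊤ f) (i : Fin s) (xh : Fin s → ℂ)
    (j : Fin s → ℕ) :
    pdMulti j (mulC i (xh i) f) xh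
      = (j i : ℂ) * pdMulti (Function.update j i (j i - 1)) f xh := by
  rcases hn : j i with _ | n
  · -- j i = 0 : both sides are zero
    have hdec := bigList_decomp j i
    rw [hn, List.replicate_zero, List.nil_append] at hdec
    rw [pdMulti_eq_Dl, hdec, Dl_append]
    rw [Dl_mulC_notMem hf (xh i) (notMem_drop_flatten j i)]
    rw [Dl_mulC_notMem (contDiff_Dl hf _) (xh i) (notMem_take_flatten j i)]
    simp [mulC]
  · -- j i = n + 1
    have hdec := bigList_decomp j i
    rw [hn] at hdec
    rw [pdMulti_eq_Dl, hdec,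
      Dl_mulC_main hf (xh i) (notMem_take_flatten j i) (notMem_drop_flatten j i) n]
    have hlow : bigList (Function.update j i (n + 1 - 1))
        = ((List.ofFn fun k => List.replicate (j k) k).take i).flatten
          ++ (List.replicate n i
            ++ ((List.ofFn fun k => List.replicate (j k) k).drop (i + 1)).flatten) := by
      rw [bigList_decomp (Function.update j i (n + 1 - 1)) i, take_update_eq, drop_update_eq,
        Function.update_self, Nat.add_sub_cancel]
    rw [pdMulti_eq_Dl, hlow]
    simp [mulC]

lemma prod_factorial_update (x : Fin s → ℕ) (i : Fin s) (m : ℕ) :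
    (∏ k, (((Function.update x i m) k).factorial : ℂ))
      = (m.factorial : ℂ) * ∏ k ∈ Finset.univ.erase i, ((x k).factorial : ℂ) := by
  have : (fun k => (((Function.update x i m) k).factorial : ℂ))
      = Function.update (fun k => ((x k).factorial : ℂ)) i ((m.factorial : ℂ)) := by
    funext k
    by_cases hk : k = i
    · subst hk; simp
    · simp [Function.update_of_ne hk]
  rw [this, Finset.prod_update_of_mem (Finset.mem_univ i), Finset.sdiff_singleton_eq_erase]

lemma scaledPD_mulC {f : (Fin s → ℂ) → ℂ} (hf : ContDiff ℂ ⊤ f) (xh : Fin s → ℂ) (i : Fin s)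
    (x : Fin s → ℕ) :
    scaledPD x (mulC i (xh i) f) xh
      = if x i = 0 then 0 else scaledPD (Function.update x i (x i - 1)) f xh := by
  rw [scaledPD, pdMulti_mulC hf i xh x]
  rcases hn : x i with _ | m
  · simp
  · simp only [Nat.succ_ne_zero, if_false]
    rw [scaledPD, prod_factorial_update x i (m + 1 - 1)]
    have hx : (∏ k, ((x k).factorial : ℂ))
        = ((m + 1).factorial : ℂ) * ∏ k ∈ Finset.univ.erase i, ((x k).factorial : ℂ) := by
      rw [← Finset.mul_prod_erase Finset.univ _ (Finset.mem_univ i), hn]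
    rw [hx, Nat.add_sub_cancel]
    have h1 : ((m.factorial : ℂ)) ≠ 0 := Nat.cast_ne_zero.mpr m.factorial_ne_zero
    have h2 : ((m : ℂ) + 1) ≠ 0 := by
      have : (((m + 1 : ℕ)) : ℂ) ≠ 0 := Nat.cast_ne_zero.mpr (Nat.succ_ne_zero m)
      push_cast at this; exact this
    have h3 : (∏ k ∈ Finset.univ.erase i, ((x k).factorial : ℂ)) ≠ 0 :=
      Finset.prod_ne_zero_iff.mpr fun k _ => Nat.cast_ne_zero.mpr (x k).factorial_ne_zero
    rw [Nat.factorial_succ]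
    push_cast
    field_simp

lemma mem_range_raise {i : Fin s} {x : Fin s → ℕ} (hx : x i ≠ 0) :
    x ∈ Set.range (raiseIdx i) := by
  refine ⟨Function.update x i (x i - 1), ?_⟩
  funext k
  by_cases hk : k = i
  · subst hk
    simp [raiseIdx]
    omega
  · simp [raiseIdx, Function.update_of_ne hk]

lemma raise_lower (i : Fin s) (j : Fin s → ℕ) :
    Function.update (raiseIdx i j) i (raiseIdx i j i - 1) = j := by
  funext k
  by_cases hk : k = i
  · subst hk; simp [raiseIdx]
  · simp [raiseIdx, Function.update_of_ne hk]

lemma applyF_mulC {f : (Fin s → ℂ) → ℂ} (hf : ContDiff ℂ ⊤ f) (xh : Fin s → ℂ)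
    (c : (Fin s → ℕ) →₀ ℂ) (i : Fin s) :
    applyF xh c (mulC i (xh i) f) = applyF xh (phi i c) f := by
  classical
  set g : (Fin s → ℕ) → ℂ := fun x => c x *
    (if x i = 0 then 0 else scaledPD (Function.update x i (x i - 1)) f xh) with hg
  have hL : applyF xh c (mulC i (xh i) f) = ∑ x ∈ c.support, g x := by
    rw [applyF, Finsupp.sum]
    refine Finset.sum_congr rfl fun x _ => ?_
    rw [scaledPD_mulC hf xh i x]
  rw [hL, applyF, Finsupp.sum]
  have hsupp : (phi i c).support = c.support.preimage (raiseIdx i)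
      ((raiseIdx_injective i).injOn) := rfl
  rw [hsupp]
  rw [← Finset.sum_preimage (raiseIdx i) c.support ((raiseIdx_injective i).injOn) g
    (fun x hx hrange => ?_)]
  · refine Finset.sum_congr rfl fun x _ => ?_
    rw [hg]
    simp only [phi, Finsupp.comapDomain_apply]
    have h1 : raiseIdx i x i = x i + 1 := by simp [raiseIdx]
    rw [h1]
    simp only [Nat.succ_ne_zero, if_false]
    rw [show Function.update (raiseIdx i x) i (x i + 1 - 1) = x by
      have := raise_lower i x; rwa [h1] at this]
  · have hx0 : x i = 0 := by
      by_contra h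
      exact hrange (mem_range_raise h)
    simp [hg, hx0]

def mono (xh : Fin s → ℂ) (j : Fin s → ℕ) (f : (Fin s → ℂ) → ℂ) : (Fin s → ℂ) → ℂ :=
  fun x => (∏ k, (x k - xh k) ^ (j k)) * f x

lemma contDiff_mono {f : (Fin s → ℂ) → ℂ} (hf : ContDiff ℂ ⊤ f) (xh : Fin s → ℂ)
    (j : Fin s → ℕ) : ContDiff ℂ ⊤ (mono xh j f) :=
  (contDiff_prod fun k _ => ((contDiff_coord k).sub contDiff_const).pow (j k)).mul hf

lemma mono_raise (xh : Fin s → ℂ) (j : Fin s → ℕ) (i : Fin s) (f : (Fin s → ℂ) → ℂ) :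
    mono xh (raiseIdx i j) f = mulC i (xh i) (mono xh j f) := by
  funext x
  simp only [mono, mulC, raiseIdx]
  rw [← mul_assoc]
  congr 1
  rw [← Finset.mul_prod_erase Finset.univ _ (Finset.mem_univ i),
    ← Finset.mul_prod_erase Finset.univ (fun k => (x k - xh k) ^ (j k)) (Finset.mem_univ i)]
  rw [Function.update_self, pow_succ']
  rw [Finset.prod_congr rfl fun k hk =>
    by rw [Function.update_of_ne (Finset.ne_of_mem_erase hk)]]
  ring

lemma mono_zero (xh : Fin s → ℂ) (f : (Fin s → ℂ) → ℂ) : mono xh 0 f = f := by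
  funext x; simp [mono]

lemma applyF_single_zero (xh : Fin s → ℂ) (a : ℂ) (f : (Fin s → ℂ) → ℂ) :
    applyF xh (Finsupp.single 0 a) f = a * f xh := by
  rw [applyF, Finsupp.sum_single_index (by simp)]
  congr 1
  rw [scaledPD]
  have hb : bigList (0 : Fin s → ℕ) = [] := by
    simp [bigList]
  rw [pdMulti_eq_Dl, hb]
  simp

lemma forward_dir {t : ℕ} (F : Fin t → ((Fin s → ℂ) → ℂ)) (xh : Fin s → ℂ)
    (hs : ∀ i, ContDiff ℂ ⊤ (F i)) (hz : ∀ i, F i xh = 0) :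
    ∀ (α : ℕ) (c : (Fin s → ℕ) →₀ ℂ), c ∈ DSub t F xh α →
      ∀ (j : Fin s → ℕ) (i : Fin t), applyF xh c (mono xh j (F i)) = 0 := by
  intro α
  induction α with
  | zero =>
    intro c hc j i
    obtain ⟨a, rfl⟩ := hc
    rw [applyF_single_zero]
    simp [mono, hz i]
  | succ α ih =>
    intro c hc j i
    obtain ⟨hdeg, hF, hphi⟩ := hc
    by_cases hj : j = 0
    · subst hj; rw [mono_zero]; exact hF i
    · obtain ⟨i₀, hi₀⟩ := Function.ne_iff.mp hj
      have hi₀' : j i₀ ≠ 0 := by simpa using hi₀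
      obtain ⟨j', rfl⟩ := mem_range_raise hi₀'
      rw [mono_raise, applyF_mulC (contDiff_mono (hs i) xh j') xh c i₀]
      exact ih (phi i₀ c) (hphi i₀) j' i

lemma backward_dir {t : ℕ} (F : Fin t → ((Fin s → ℂ) → ℂ)) (xh : Fin s → ℂ)
    (hs : ∀ i, ContDiff ℂ ⊤ (F i)) :
    ∀ (α : ℕ) (c : (Fin s → ℕ) →₀ ℂ), (∀ j ∈ c.support, (∑ k, j k) ≤ α) →
      (∀ (j : Fin s → ℕ) (i : Fin t), applyF xh c (mono xh j (F i)) = 0) →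
      c ∈ DSub t F xh α := by
  intro α
  induction α with
  | zero =>
    intro c hdeg _
    refine ⟨c 0, Finsupp.ext fun j => ?_⟩
    by_cases hj : j = 0
    · subst hj; simp
    · rw [Finsupp.single_eq_of_ne' (Ne.symm hj)]
      by_contra h
      have hmem : j ∈ c.support := Finsupp.mem_support_iff.mpr h
      have := hdeg j hmem
      have hall : ∀ k, j k = 0 := by
        intro k
        have := Finset.sum_eq_zero_iff.mp (Nat.le_zero.mp this) k (Finset.mem_univ k)
        exact this
      exact hj (funext hall)
  | succ α ih =>
    intro c hdeg hvan
    refine ⟨hdeg, fun i => ?_, fun i => ih (phi i c) ?_ ?_⟩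
    · have := hvan 0 i; rwa [mono_zero] at this
    · intro j hj
      have hmem : raiseIdx i j ∈ c.support := by
        have : (phi i c) j ≠ 0 := Finsupp.mem_support_iff.mp hj
        rw [phi, Finsupp.comapDomain_apply] at this
        exact Finsupp.mem_support_iff.mpr this
      have hb := hdeg _ hmem
      have hsum : (∑ k, raiseIdx i j k) = (∑ k, j k) + 1 := by
        rw [raiseIdx, Finset.sum_update_of_mem (Finset.mem_univ i),
          Finset.sdiff_singleton_eq_erase,
          ← Finset.add_sum_erase Finset.univ j (Finset.mem_univ i)]
        omega
      omega
    · intro j i'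
      rw [← applyF_mulC (contDiff_mono (hs i') xh j) xh c i, ← mono_raise]
      exact hvan (raiseIdx i j) i'

/-- Lemma 1: a differential functional `c` lies in the dual space
`D_{x̂}(F)` (i.e. it vanishes on `F` and satisfies the closedness condition
`φ_i(c) ∈ D_{x̂}(F)` for all `i`) if and only if `c((x - x̂)^j · f_i) = 0`
for every multi-index `j ≥ 0` and every `i`. -/
theorem stmt3 {s t : ℕ} (F : Fin t → ((Fin s → ℂ) → ℂ)) (xh : Fin s → ℂ)
    (hsmooth : ∀ i, ContDiff ℂ ⊤ (F i))
    (hzero : ∀ i, F i xh = 0)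
    (c : (Fin s → ℕ) →₀ ℂ) :
    c ∈ DualSpace t F xh ↔
      ∀ (j : Fin s → ℕ) (i : Fin t),
        applyF xh c (fun x => (∏ k, (x k - xh k) ^ (j k)) * F i x) = 0 := by
  constructor
  · intro hc j i
    obtain ⟨S, ⟨α, rfl⟩, hcS⟩ := hc
    exact forward_dir F xh hsmooth hzero α c hcS j i
  · intro hvan
    refine Set.mem_iUnion.mpr ⟨c.support.sup fun j => ∑ k, j k, ?_⟩
    refine backward_dir F xh hsmooth _ c (fun j hj => Finset.le_sup hj) hvan
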